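/- Let $c > 0$, $0 < \alpha < 1$, and let $(v_n)_{n > 1}$ be a real sequence with $v_n \in (0,1)$ such that $n^{(1+\alpha)/2}\,|v_n - \rho_n|$ is bounded, where $\rho_n = 1 - c\,n^{-\alpha}$. Define $\widehat{\alpha}_n = (\ln c - \ln(1 - v_n))/\ln n$. Then $(\ln n)\, n^{(1-\alpha)/2}\, |\widehat{\alpha}_n - \alpha|$ is bounded, and in particular $\widehat{\alpha}_n \to \alpha$. -/

import Mathlib

open Filter Real Set

lemma abs_log_sub_log_le' {a b : ℝ} (ha : 0 < a) (hb : 0 < b) :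
    |Real.log a - Real.log b| ≤ |a - b| / min a b := by
  have hmin : 0 < min a b := lt_min ha hb
  rw [abs_sub_le_iff]
  constructor
  · calc Real.log a - Real.log b = Real.log (a / b) := (Real.log_div ha.ne' hb.ne').symm
      _ ≤ a / b - 1 := Real.log_le_sub_one_of_pos (div_pos ha hb)
      _ = (a - b) / b := by field_simp
      _ ≤ |a - b| / b := div_le_div_of_nonneg_right (le_abs_self _) hb.le
      _ ≤ |a - b| / min a b :=
        div_le_div_of_nonneg_left (abs_nonneg _) hmin (min_le_right _ _)
  · calc Real.log b - Real.log a = Real.log (b / a) := (Real.log_div hb.ne' ha.ne').symm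
      _ ≤ b / a - 1 := Real.log_le_sub_one_of_pos (div_pos hb ha)
      _ = (b - a) / a := by field_simp
      _ ≤ |a - b| / a :=
        div_le_div_of_nonneg_right ((abs_sub_comm a b ▸ le_abs_self _)) ha.le
      _ ≤ |a - b| / min a b :=
        div_le_div_of_nonneg_left (abs_nonneg _) hmin (min_le_left _ _)

theorem stmt_17 (c α : ℝ) (hc : 0 < c) (hα : 0 < α ∧ α < 1)
    (v ρ : ℕ → ℝ) (hρ : ∀ n : ℕ, ρ n = 1 - c * (n : ℝ) ^ (-α))
    (hv : ∀ n : ℕ, 1 < n → v n ∈ Ioo (0 : ℝ) 1)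
    (hbd : ∃ M : ℝ, ∀ n : ℕ, (n : ℝ) ^ ((1 + α) / 2) * |v n - ρ n| ≤ M) :
    (∃ M : ℝ, ∀ n : ℕ, 1 < n →
      Real.log n * (n : ℝ) ^ ((1 - α) / 2) *
        |(Real.log c - Real.log (1 - v n)) / Real.log n - α| ≤ M) ∧
    Tendsto (fun n : ℕ => (Real.log c - Real.log (1 - v n)) / Real.log n)
      atTop (nhds α) := by
  obtain ⟨hα0, hα1⟩ := hα
  obtain ⟨M, hM⟩ := hbd
  have hM0 : 0 ≤ M := le_trans (by positivity) (hM 2)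
  -- notation
  set f : ℕ → ℝ := fun n => Real.log n * (n : ℝ) ^ ((1 - α) / 2) *
      |(Real.log c - Real.log (1 - v n)) / Real.log n - α| with hf
  -- pointwise key bound
  have key : ∀ n : ℕ, 1 < n →
      f n ≤ (n : ℝ) ^ ((1 - α) / 2) * |v n - ρ n| / min (1 - v n) (c * (n : ℝ) ^ (-α)) := by
    intro n hn
    have hx1 : (1 : ℝ) < (n : ℝ) := by exact_mod_cast hn
    have hx0 : (0 : ℝ) < (n : ℝ) := lt_trans one_pos hx1
    have hlog : 0 < Real.log n := Real.log_pos hx1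
    have ha : 0 < 1 - v n := by have := (hv n hn).2; linarith
    have hb : 0 < c * (n : ℝ) ^ (-α) := by positivity
    have hEq : Real.log n * |(Real.log c - Real.log (1 - v n)) / Real.log n - α|
        = |Real.log (c * (n : ℝ) ^ (-α)) - Real.log (1 - v n)| := by
      have h : (Real.log c - Real.log (1 - v n)) / Real.log n - α
          = (Real.log (c * (n : ℝ) ^ (-α)) - Real.log (1 - v n)) / Real.log n := by
        rw [Real.log_mul hc.ne' (by positivity), Real.log_rpow hx0]
        field_simp
        ring
      rw [h, abs_div, abs_of_pos hlog]
      field_simp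
    have hsub : |v n - ρ n| = |(1 - v n) - c * (n : ℝ) ^ (-α)| := by
      rw [hρ n, abs_sub_comm]
      ring_nf
    have hp : (0 : ℝ) ≤ (n : ℝ) ^ ((1 - α) / 2) := by positivity
    calc f n = (n : ℝ) ^ ((1 - α) / 2) *
          (Real.log n * |(Real.log c - Real.log (1 - v n)) / Real.log n - α|) := by
            rw [hf]; ring
      _ = (n : ℝ) ^ ((1 - α) / 2) *
          |Real.log (1 - v n) - Real.log (c * (n : ℝ) ^ (-α))| := by
            rw [hEq, abs_sub_comm]
      _ ≤ (n : ℝ) ^ ((1 - α) / 2) *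
          (|(1 - v n) - c * (n : ℝ) ^ (-α)| / min (1 - v n) (c * (n : ℝ) ^ (-α))) := by
            exact mul_le_mul_of_nonneg_left (abs_log_sub_log_le' ha hb) hp
      _ = (n : ℝ) ^ ((1 - α) / 2) * |v n - ρ n| / min (1 - v n) (c * (n : ℝ) ^ (-α)) := by
            rw [hsub]; ring
  -- eventual bound by 2*M/c
  have htop : Tendsto (fun n : ℕ => (c / 2) * (n : ℝ) ^ ((1 - α) / 2)) atTop atTop := by
    apply Tendsto.const_mul_atTop (by linarith : (0:ℝ) < c / 2)
    exact (tendsto_rpow_atTop (by linarith : (0:ℝ) < (1 - α) / 2)).comp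
      tendsto_natCast_atTop_atTop
  obtain ⟨N, hN⟩ := (htop.eventually_ge_atTop M).exists_forall_of_atTop
  have hev : ∀ n : ℕ, N ≤ n → 1 < n → f n ≤ 2 * M / c := by
    intro n hnN hn
    have hx1 : (1 : ℝ) < (n : ℝ) := by exact_mod_cast hn
    have hx0 : (0 : ℝ) < (n : ℝ) := lt_trans one_pos hx1
    have ha : 0 < 1 - v n := by have := (hv n hn).2; linarith
    have hb : 0 < c * (n : ℝ) ^ (-α) := by positivity
    -- |v n - ρ n| ≤ M * x^(-(1+α)/2)
    have h1 : |v n - ρ n| ≤ M * (n : ℝ) ^ (-((1 + α) / 2)) := by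
      have h2 := hM n
      have h3 : (0:ℝ) < (n : ℝ) ^ ((1 + α) / 2) := by positivity
      rw [Real.rpow_neg hx0.le, mul_comm M, ← div_eq_inv_mul, le_div_iff₀ h3]
      linarith [h2]
    -- M * x^{-(1+α)/2} ≤ (c/2) * x^{-α}
    have hMc : M ≤ (c / 2) * (n : ℝ) ^ ((1 - α) / 2) := hN n hnN
    have h4 : M * (n : ℝ) ^ (-((1 + α) / 2)) ≤ (c / 2) * (n : ℝ) ^ (-α) := by
      have h5 : (0:ℝ) < (n : ℝ) ^ (-((1 + α) / 2)) := by positivity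
      calc M * (n : ℝ) ^ (-((1 + α) / 2))
          ≤ ((c / 2) * (n : ℝ) ^ ((1 - α) / 2)) * (n : ℝ) ^ (-((1 + α) / 2)) :=
            mul_le_mul_of_nonneg_right hMc h5.le
        _ = (c / 2) * (n : ℝ) ^ (-α) := by
            have hexp : (1 - α) / 2 + -((1 + α) / 2) = -α := by ring
            rw [mul_assoc, ← Real.rpow_add hx0, hexp]
    -- lower bound on min
    have hamin : (c / 2) * (n : ℝ) ^ (-α) ≤ min (1 - v n) (c * (n : ℝ) ^ (-α)) := by
      apply le_min
      · have h6 : 1 - ρ n = c * (n : ℝ) ^ (-α) := by rw [hρ n]; ring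
        have h7 : (1 - ρ n) - |v n - ρ n| ≤ 1 - v n := by
          have h8 : v n - ρ n ≤ |v n - ρ n| := le_abs_self _
          linarith
        have h9 : |v n - ρ n| ≤ (c / 2) * (n : ℝ) ^ (-α) := le_trans h1 h4
        have h10 : c * (n : ℝ) ^ (-α) - (c / 2) * (n : ℝ) ^ (-α)
            = (c / 2) * (n : ℝ) ^ (-α) := by ring
        linarith [h6, h7, h9, h10]
      · have h5 : (0:ℝ) ≤ (n : ℝ) ^ (-α) := by positivity
        nlinarith
    have hminpos : (0:ℝ) < (c / 2) * (n : ℝ) ^ (-α) := by positivity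
    -- combine
    have hnum : (n : ℝ) ^ ((1 - α) / 2) * |v n - ρ n| ≤ M * (n : ℝ) ^ (-α) := by
      calc (n : ℝ) ^ ((1 - α) / 2) * |v n - ρ n|
          ≤ (n : ℝ) ^ ((1 - α) / 2) * (M * (n : ℝ) ^ (-((1 + α) / 2))) :=
            mul_le_mul_of_nonneg_left h1 (by positivity)
        _ = M * ((n : ℝ) ^ ((1 - α) / 2) * (n : ℝ) ^ (-((1 + α) / 2))) := by ring
        _ = M * (n : ℝ) ^ (-α) := by
            have hexp : (1 - α) / 2 + -((1 + α) / 2) = -α := by ring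
            rw [← Real.rpow_add hx0, hexp]
    calc f n ≤ (n : ℝ) ^ ((1 - α) / 2) * |v n - ρ n| /
          min (1 - v n) (c * (n : ℝ) ^ (-α)) := key n hn
      _ ≤ (M * (n : ℝ) ^ (-α)) / ((c / 2) * (n : ℝ) ^ (-α)) := by
          apply div_le_div₀ (by positivity) hnum hminpos hamin
      _ = 2 * M / c := by
          rw [mul_div_mul_right _ _ (ne_of_gt (by positivity : (0:ℝ) < (n:ℝ) ^ (-α))),
            div_div_eq_mul_div]
          ring
  -- global bound
  obtain ⟨B, hB⟩ := ((Finset.range N).image f).exists_le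
  have hbound : ∃ M' : ℝ, ∀ n : ℕ, 1 < n → f n ≤ M' := by
    refine ⟨max B (2 * M / c), fun n hn => ?_⟩
    rcases lt_or_ge n N with h | h
    · exact le_max_of_le_left (hB _ (Finset.mem_image_of_mem f (Finset.mem_range.2 h)))
    · exact le_max_of_le_right (hev n h hn)
  refine ⟨hbound, ?_⟩
  -- tendsto
  obtain ⟨M', hM'⟩ := hbound
  have hM'0 : 0 ≤ max M' 0 := le_max_right _ _
  have hDen : Tendsto (fun n : ℕ => Real.log n * (n : ℝ) ^ ((1 - α) / 2)) atTop atTop := by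
    apply Tendsto.atTop_mul_atTop₀
    · exact Real.tendsto_log_atTop.comp tendsto_natCast_atTop_atTop
    · exact (tendsto_rpow_atTop (by linarith : (0:ℝ) < (1 - α) / 2)).comp
        tendsto_natCast_atTop_atTop
  have hg : Tendsto (fun n : ℕ => max M' 0 / (Real.log n * (n : ℝ) ^ ((1 - α) / 2)))
      atTop (nhds 0) := tendsto_const_nhds.div_atTop hDen
  have hdiff : Tendsto (fun n : ℕ =>
      (Real.log c - Real.log (1 - v n)) / Real.log n - α) atTop (nhds 0) := by
    apply squeeze_zero_norm' _ hg
    filter_upwards [eventually_gt_atTop 1] with n hn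
    have hx1 : (1 : ℝ) < (n : ℝ) := by exact_mod_cast hn
    have hlog : 0 < Real.log n := Real.log_pos hx1
    have hD : 0 < Real.log n * (n : ℝ) ^ ((1 - α) / 2) := by positivity
    rw [Real.norm_eq_abs, le_div_iff₀ hD]
    calc |(Real.log c - Real.log (1 - v n)) / Real.log n - α| *
          (Real.log n * (n : ℝ) ^ ((1 - α) / 2)) = f n := by rw [hf]; ring
      _ ≤ M' := hM' n hn
      _ ≤ max M' 0 := le_max_left _ _
  have := hdiff.add_const α
  simpa using this
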